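/- Let (X, μ) be a finite measure space, q = 2 + 2/n with n ≥ 1, f : X → ℝ bounded measurable with ∫_X f dμ < 0, and u : X → ℝ nonnegative with u ∈ L^q(μ). Write ū ∈ ℝ for a constant (the mean value) and suppose ∫_X f u^q dμ = 1. Then there exists a constant C depending only on n, sup|f|, |∫ f dμ|, and μ(X) such that ū^q ≤ (1/2) ū^q + C ‖u − ū‖_{L^q}^q, and hence ū ≤ C' ‖u − ū‖_{L^q} + C'' for explicit constants; in particular ū is bounded in terms of ‖u − ū‖_{L^q}. -/

import Mathlib

open MeasureTheory

open Real


/-- MVT-type bound: a^q - b^q ≤ q a^(q-1) (a-b) for 0 ≤ b ≤ a, 1 ≤ q. -/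
lemma aux_mvt {q a b : ℝ} (hb : 0 ≤ b) (hab : b ≤ a) (hq : 1 ≤ q) :
    a ^ q - b ^ q ≤ q * a ^ (q - 1) * (a - b) := by
  have ha : 0 ≤ a := hb.trans hab
  rcases eq_or_lt_of_le ha with h0 | h0
  · have hb0 : b = 0 := le_antisymm (hab.trans h0.symm.le) hb
    simp [← h0, hb0]
  · have hs : -1 ≤ b / a - 1 := by
      have : 0 ≤ b / a := div_nonneg hb ha
      linarith
    have hber := one_add_mul_self_le_rpow_one_add hs hq
    have h1 : (1 : ℝ) + (b / a - 1) = b / a := by ring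
    rw [h1] at hber
    have hmul := mul_le_mul_of_nonneg_right hber (rpow_nonneg ha q)
    rw [div_rpow hb ha] at hmul
    rw [div_mul_cancel₀ _ (by positivity : a ^ q ≠ 0)] at hmul
    have hpow : a ^ q = a ^ (q - 1) * a := by
      rw [← rpow_add_one h0.ne']; ring_nf
    have key : a ^ q + q * a ^ (q - 1) * (b - a) ≤ b ^ q := by
      refine le_trans (le_of_eq ?_) hmul
      rw [hpow]; field_simp
    linarith

/-- (x+y)^p ≤ 2^p (x^p + y^p) for nonneg. -/
lemma aux_addpow {p x y : ℝ} (hx : 0 ≤ x) (hy : 0 ≤ y) (hp : 0 ≤ p) :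
    (x + y) ^ p ≤ 2 ^ p * (x ^ p + y ^ p) := by
  have h1 : x + y ≤ 2 * max x y := by
    rcases le_total x y with h | h
    · simp [max_eq_right h]; linarith
    · simp [max_eq_left h]; linarith
  have h2 : (x + y) ^ p ≤ (2 * max x y) ^ p :=
    rpow_le_rpow (by linarith) h1 hp
  have h3 : (2 * max x y) ^ p = 2 ^ p * (max x y) ^ p :=
    mul_rpow (by norm_num) (le_max_of_le_left hx)
  have h4 : (max x y) ^ p ≤ x ^ p + y ^ p := by
    rcases le_total x y with h | h
    · rw [max_eq_right h]; nlinarith [rpow_nonneg hx p]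
    · rw [max_eq_left h]; nlinarith [rpow_nonneg hy p]
  calc (x + y) ^ p ≤ 2 ^ p * (max x y) ^ p := h3 ▸ h2
    _ ≤ 2 ^ p * (x ^ p + y ^ p) :=
        mul_le_mul_of_nonneg_left h4 (rpow_nonneg (by norm_num) p)

/-- Lemma A : |a^q - b^q| ≤ q 2^q (|a-b|^q + b^(q-1)|a-b|). -/
lemma aux_A {q a b : ℝ} (ha : 0 ≤ a) (hb : 0 ≤ b) (hq : 1 ≤ q) :
    |a ^ q - b ^ q| ≤ q * 2 ^ q * (|a - b| ^ q + b ^ (q - 1) * |a - b|) := by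
  have hq0 : (0:ℝ) ≤ q := by linarith
  have hq1 : (0:ℝ) ≤ q - 1 := by linarith
  have h2q : (1:ℝ) ≤ 2 ^ q := one_le_rpow (by norm_num) hq0
  have habs : 0 ≤ |a - b| ^ q := rpow_nonneg (abs_nonneg _) q
  rcases le_total a b with h | h
  · -- |a^q - b^q| = b^q - a^q ≤ q b^(q-1) (b - a)
    have hmvt := aux_mvt ha h hq
    have habseq : |a - b| = b - a := by rw [abs_sub_comm]; exact abs_of_nonneg (by linarith)
    have h1 : |a ^ q - b ^ q| = b ^ q - a ^ q := by
      rw [abs_sub_comm]; exact abs_of_nonneg (by linarith [rpow_le_rpow ha h hq0])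
    rw [h1, habseq]
    have hbp : 0 ≤ b ^ (q - 1) := rpow_nonneg hb _
    have habs2 : 0 ≤ (b - a) ^ q := rpow_nonneg (by linarith) q
    nlinarith [hmvt,
      mul_le_mul_of_nonneg_left h2q (mul_nonneg (mul_nonneg hq0 hbp) (sub_nonneg.mpr h)),
      mul_nonneg (mul_nonneg hq0 (zero_le_one.trans h2q)) habs2]
  · -- b ≤ a
    have t := a - b
    have ht : 0 ≤ a - b := by linarith
    have habseq : |a - b| = a - b := abs_of_nonneg ht
    have h1 : |a ^ q - b ^ q| = a ^ q - b ^ q :=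
      abs_of_nonneg (by linarith [rpow_le_rpow hb h hq0])
    rw [h1, habseq]
    have hmvt := aux_mvt hb h hq
    have hA : a ^ (q - 1) ≤ 2 ^ (q-1) * (b ^ (q-1) + (a - b) ^ (q-1)) := by
      have : a = b + (a - b) := by ring
      calc a ^ (q-1) = (b + (a - b)) ^ (q-1) := by rw [← this]
        _ ≤ 2 ^ (q-1) * (b ^ (q-1) + (a - b) ^ (q-1)) := aux_addpow hb ht hq1
    have hpow : (a - b) ^ (q - 1) * (a - b) = (a - b) ^ q := by
      rw [← rpow_add_one' ht (by linarith : q - 1 + 1 ≠ 0)]; ring_nf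
    have h2q' : (2:ℝ) ^ (q-1) ≤ 2 ^ q := rpow_le_rpow_of_exponent_le (by norm_num) (by linarith)
    have hbp : 0 ≤ b ^ (q - 1) := rpow_nonneg hb _
    have htp : 0 ≤ (a - b) ^ (q - 1) := rpow_nonneg ht _
    have h2p : (0:ℝ) ≤ 2 ^ (q-1) := rpow_nonneg (by norm_num) _
    calc a ^ q - b ^ q ≤ q * a ^ (q - 1) * (a - b) := hmvt
      _ ≤ q * (2 ^ (q-1) * (b ^ (q-1) + (a - b) ^ (q-1))) * (a - b) :=
          mul_le_mul_of_nonneg_right (mul_le_mul_of_nonneg_left hA hq0) ht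
      _ = q * 2 ^ (q-1) * ((a - b) ^ q + b ^ (q-1) * (a - b)) := by rw [← hpow]; ring
      _ ≤ q * 2 ^ q * ((a - b) ^ q + b ^ (q-1) * (a - b)) := by
          refine mul_le_mul_of_nonneg_right (mul_le_mul_of_nonneg_left h2q' hq0) ?_
          exact add_nonneg (rpow_nonneg ht q) (mul_nonneg hbp ht)

/-- Lemma B : Young-type absorption. -/
lemma aux_B {q b t ε : ℝ} (hb : 0 ≤ b) (ht : 0 ≤ t) (hε : 0 < ε) (hq : 1 ≤ q) :
    b ^ (q - 1) * t ≤ ε * b ^ q + ε ^ (1 - q) * t ^ q := by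
  have hq1 : (0:ℝ) ≤ q - 1 := by linarith
  have htq : 0 ≤ t ^ q := rpow_nonneg ht q
  have hεq : 0 ≤ ε ^ (1 - q) := rpow_nonneg hε.le _
  have hbq : 0 ≤ b ^ q := rpow_nonneg hb q
  have hbpow : b ^ (q - 1) * b = b ^ q := by
    rw [← rpow_add_one' hb (by linarith : q - 1 + 1 ≠ 0)]; ring_nf
  rcases le_total t (ε * b) with h | h
  · have : b ^ (q - 1) * t ≤ b ^ (q - 1) * (ε * b) :=
      mul_le_mul_of_nonneg_left h (rpow_nonneg hb _)
    nlinarith [mul_nonneg hεq htq]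
  · have hb' : b ≤ t / ε := (le_div_iff₀ hε).mpr (by linarith [mul_comm ε b])
    have h1 : b ^ (q-1) ≤ (t / ε) ^ (q-1) := rpow_le_rpow hb hb' hq1
    have h2 : (t / ε) ^ (q-1) = t ^ (q-1) * ε ^ (1-q) := by
      rw [div_rpow ht hε.le, div_eq_mul_inv, ← rpow_neg hε.le]; ring_nf
    have h3 : t ^ (q - 1) * t = t ^ q := by
      rw [← rpow_add_one' ht (by linarith : q - 1 + 1 ≠ 0)]; ring_nf
    have h4 : b ^ (q-1) * t ≤ t ^ (q-1) * ε ^ (1-q) * t := by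
      rw [← h2]; exact mul_le_mul_of_nonneg_right h1 ht
    have hεb : 0 ≤ ε * b ^ q := mul_nonneg hε.le hbq
    nlinarith [h4, h3]

/-- Bound on the mean value `ubar` of the conformal factor in the null Yamabe case:
the constant `C` depends only on `n`, the bound `Mf` on `|f|`, the value
`I = |∫ f dμ|` (with `∫ f dμ = -I < 0`) and the total mass `V` of `μ`. -/
theorem stmt_17 (n : ℕ) (hn : 1 ≤ n) (Mf I V : ℝ)
    (hMf : 0 ≤ Mf) (hI : 0 < I) (hV : 0 < V) :
    ∃ C : ℝ, 0 < C ∧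
      ∀ (X : Type) (mX : MeasurableSpace X) (μ : Measure X)
        (f u : X → ℝ) (ubar : ℝ),
        μ Set.univ = ENNReal.ofReal V →
        Measurable f → (∀ x, |f x| ≤ Mf) →
        Integrable f μ → (∫ x, f x ∂μ) = -I →
        (∀ x, 0 ≤ u x) → 0 ≤ ubar →
        Integrable (fun x => u x ^ ((2 : ℝ) + 2 / n)) μ →
        Integrable (fun x => f x * u x ^ ((2 : ℝ) + 2 / n)) μ →
        (∫ x, f x * u x ^ ((2 : ℝ) + 2 / n) ∂μ) = 1 →
        ubar ^ ((2 : ℝ) + 2 / n) ≤ (1 / 2) * ubar ^ ((2 : ℝ) + 2 / n)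
          + C * ∫ x, |u x - ubar| ^ ((2 : ℝ) + 2 / n) ∂μ := by
  set q : ℝ := 2 + 2 / n with hqdef
  have hq : 1 ≤ q := by
    have : (0:ℝ) ≤ 2 / n := by positivity
    simp only [hqdef]; linarith
  have hq0 : 0 < q := by linarith
  set M : ℝ := Mf + 1 with hMdef
  have hM : 1 ≤ M := by simp only [hMdef]; linarith
  have hM0 : 0 < M := by linarith
  set B : ℝ := q * 2 ^ q with hBdef
  have hB : 0 < B := by
    have : (0:ℝ) < 2 ^ q := rpow_pos_of_pos (by norm_num) q
    positivity
  set ε : ℝ := I / (2 * M * B * V) with hεdef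
  have hε : 0 < ε := by positivity
  set K1 : ℝ := M * B * (1 + ε ^ (1 - q)) with hK1def
  have hK1 : 0 < K1 := by
    have : (0:ℝ) ≤ ε ^ (1 - q) := rpow_nonneg hε.le _
    positivity
  refine ⟨2 * K1 / I, by positivity, ?_⟩
  intro X mX μ f u ubar hμV hfm hfb hfi hfI hu hub hui hfui hfu1
  haveI : IsFiniteMeasure μ := ⟨by rw [hμV]; exact ENNReal.ofReal_lt_top⟩
  -- measurability of u
  have hvm : AEMeasurable (fun x => u x ^ q) μ := hui.aemeasurable
  have hum : AEMeasurable u μ := by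
    have heq : (fun x => (u x ^ q) ^ q⁻¹) = u :=
      funext fun x => rpow_rpow_inv (hu x) hq0.ne'
    rw [← heq]
    exact (Real.continuous_rpow_const (inv_nonneg.mpr hq0.le)).measurable.comp_aemeasurable hvm
  -- integrability of g := |u - ubar|^q
  set g : X → ℝ := fun x => |u x - ubar| ^ q with hgdef
  have hg0 : ∀ x, 0 ≤ g x := fun x => rpow_nonneg (abs_nonneg _) q
  have hgm : AEMeasurable g μ := by
    have habs : AEMeasurable (fun x => |u x - ubar|) μ :=
      continuous_abs.measurable.comp_aemeasurable (hum.sub aemeasurable_const)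
    exact (Real.continuous_rpow_const hq0.le).measurable.comp_aemeasurable habs
  have hgint : Integrable g μ := by
    refine Integrable.mono' ((hui.const_mul (2 ^ q)).add (integrable_const (2 ^ q * ubar ^ q)))
      hgm.aestronglyMeasurable (ae_of_all μ fun x => ?_)
    have h1 : |u x - ubar| ≤ u x + ubar := (abs_sub _ _).trans (by
      rw [abs_of_nonneg (hu x), abs_of_nonneg hub])
    have h2 : g x ≤ (u x + ubar) ^ q :=
      rpow_le_rpow (abs_nonneg _) h1 hq0.le
    have h3 := aux_addpow (hu x) hub hq0.le
    rw [Real.norm_eq_abs, abs_of_nonneg (hg0 x)]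
    have h4 : (2:ℝ) ^ q * (u x ^ q + ubar ^ q) = 2 ^ q * u x ^ q + 2 ^ q * ubar ^ q := by ring
    simp only [Pi.add_apply]
    linarith
  -- pointwise bound
  set d : X → ℝ := fun x => f x * (u x ^ q - ubar ^ q) with hddef
  have hP : ∀ x, |d x| ≤ K1 * g x + M * B * ε * ubar ^ q := by
    intro x
    have h1 : |f x| ≤ M := (hfb x).trans (by simp only [hMdef]; linarith)
    have hA := aux_A (hu x) hub hq
    have hB2 := aux_B hub (abs_nonneg (u x - ubar)) hε hq
    have hd : |d x| = |f x| * |u x ^ q - ubar ^ q| := abs_mul _ _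
    have hBnn : 0 ≤ B := hB.le
    calc |d x| = |f x| * |u x ^ q - ubar ^ q| := hd
      _ ≤ M * |u x ^ q - ubar ^ q| := mul_le_mul_of_nonneg_right h1 (abs_nonneg _)
      _ ≤ M * (B * (|u x - ubar| ^ q + ubar ^ (q - 1) * |u x - ubar|)) := by
          refine mul_le_mul_of_nonneg_left ?_ hM0.le
          simpa only [hBdef] using hA
      _ ≤ M * (B * (g x + (ε * ubar ^ q + ε ^ (1 - q) * g x))) := by
          refine mul_le_mul_of_nonneg_left (mul_le_mul_of_nonneg_left ?_ hBnn) hM0.le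
          simp only [hgdef]
          linarith
      _ = K1 * g x + M * B * ε * ubar ^ q := by simp only [hK1def]; ring
  -- integral computations
  have hfc : Integrable (fun x => f x * ubar ^ q) μ := hfi.mul_const _
  have hd_int : Integrable d μ := by
    have : d = fun x => f x * u x ^ q - f x * ubar ^ q := by
      funext x; simp only [hddef]; ring
    rw [this]; exact hfui.sub hfc
  have hId : ∫ x, d x ∂μ = 1 + I * ubar ^ q := by
    have h1 : ∫ x, d x ∂μ = (∫ x, f x * u x ^ q ∂μ) - ∫ x, f x * ubar ^ q ∂μ := by
      have : d = fun x => f x * u x ^ q - f x * ubar ^ q := by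
        funext x; simp only [hddef]; ring
      rw [this]; exact integral_sub hfui hfc
    rw [h1, hfu1, integral_mul_const, hfI]; ring
  have hVreal : (μ Set.univ).toReal = V := by
    rw [hμV, ENNReal.toReal_ofReal hV.le]
  have key2 : ∫ x, |d x| ∂μ ≤ K1 * (∫ x, g x ∂μ) + M * B * ε * ubar ^ q * V := by
    have hrhs : Integrable (fun x => K1 * g x + M * B * ε * ubar ^ q) μ :=
      (hgint.const_mul K1).add (integrable_const _)
    have h1 : ∫ x, |d x| ∂μ ≤ ∫ x, (K1 * g x + M * B * ε * ubar ^ q) ∂μ :=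
      integral_mono hd_int.abs hrhs hP
    have h2 : ∫ x, (K1 * g x + M * B * ε * ubar ^ q) ∂μ
        = K1 * (∫ x, g x ∂μ) + M * B * ε * ubar ^ q * V := by
      rw [integral_add (hgint.const_mul K1) (integrable_const _), integral_const_mul,
        integral_const, smul_eq_mul, measureReal_def, hVreal]
      ring
    linarith
  have key1 : I * ubar ^ q ≤ ∫ x, |d x| ∂μ := by
    have h2 : |∫ x, d x ∂μ| ≤ ∫ x, |d x| ∂μ := by
      have := norm_integral_le_integral_norm (μ := μ) d
      simpa [Real.norm_eq_abs] using this
    have h1 : ∫ x, d x ∂μ ≤ ∫ x, |d x| ∂μ := (le_abs_self _).trans h2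
    rw [hId] at h1
    have : (0:ℝ) < 1 := one_pos
    linarith
  have hεV : M * B * ε * V = I / 2 := by
    simp only [hεdef]
    field_simp
  have hG : (0:ℝ) ≤ ∫ x, g x ∂μ := integral_nonneg hg0
  have hεV2 : M * B * ε * ubar ^ q * V = I / 2 * ubar ^ q := by
    rw [show M * B * ε * ubar ^ q * V = (M * B * ε * V) * ubar ^ q from by ring, hεV]
  rw [hεV2] at key2
  have hhalf : (1/2) * (I * ubar ^ q) ≤ K1 * ∫ x, g x ∂μ := by linarith [key1, key2]
  have hub2 : (0:ℝ) ≤ ubar ^ q := rpow_nonneg hub q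
  have hfinal : (1/2) * ubar ^ q ≤ (2 * K1 / I) * ∫ x, g x ∂μ := by
    rw [div_mul_eq_mul_div (2 * K1) I, le_div_iff₀ hI]
    nlinarith [hhalf, mul_nonneg hK1.le hG]
  linarith
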